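/- arXiv:0901.2915 — 2 statements merged into one kernel-verified Lean document; each statement's English description precedes it below -/
import Mathlib

section
/- Let K ⊆ ℝ_max^n be a closed semimodule, A ∈ ℝ_max^{n×n}, B ∈ ℝ_max^{n×q}. Define φ(X) := K ∩ A^{-1}(X ⊕ Im B), the sequence X_1 := K, X_{k+1} := φ(X_k), and K^∞ := ⋂_{k∈ℕ} X_k. Then K^∞ is the maximal (A,B)-controlled invariant semimodule contained in K: K^∞ is (A,B)-controlled invariant, is contained in K, and contains every (A,B)-controlled invariant semimodule contained in K. Moreover, K^∞ is closed. -/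
/-!
Max-plus (tropical) framework.

The max-plus semiring `ℝ_max = ℝ ∪ {-∞}` is modelled as `WithBot ℝ`:
max-plus addition `a ⊕ b = max a b` is the lattice `⊔`, and max-plus
multiplication `a ⊙ b = a + b` is `+` (with `⊥ = -∞` absorbing).
The topology induced by the metric `d(a,b) = |exp a - exp b|` is the
order topology.
-/

/-- The max-plus semiring `ℝ ∪ {-∞}`. -/
abbrev Rmax : Type := WithBot ℝ

/-- The topology of `ℝ_max` (the order topology, which coincides with the
topology induced by the metric `d(a,b) = |exp a - exp b|`). -/
instance : TopologicalSpace Rmax := Preorder.topology Rmax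

instance : OrderTopology Rmax := ⟨rfl⟩

/-- Vectors with entries in a (max-plus-like) semiring `R`. -/
abbrev Vec (R : Type*) (n : ℕ) := Fin n → R

section Defs

variable {R : Type*} [LinearOrder R] [Add R] [OrderBot R]

/-- Max-plus scalar action on a vector: `(λ x)_i = λ ⊙ x_i = λ + x_i`. -/
def sm {n : ℕ} (lam : R) (x : Vec R n) : Vec R n := fun i => lam + x i

/-- Max-plus matrix-vector product: `(A x)_i = ⊕_k A_{ik} ⊙ x_k = max_k (A_{ik} + x_k)`. -/
def mulVecMP {m n : ℕ} (A : Matrix (Fin m) (Fin n) R) (x : Vec R n) : Vec R m :=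
  fun i => Finset.univ.sup fun k => A i k + x k

/-- A subsemimodule (max-plus cone) of `R^n`: a subset stable under
max-plus linear combinations `λ x ⊕ μ y`. -/
def IsSemimodule {n : ℕ} (K : Set (Vec R n)) : Prop :=
  ∀ x ∈ K, ∀ y ∈ K, ∀ lam mu : R, (sm lam x ⊔ sm mu y) ∈ K

/-- Max-plus scalar action on a pair of vectors. -/
def smP {n : ℕ} (lam : R) (p : Vec R n × Vec R n) : Vec R n × Vec R n :=
  (sm lam p.1, sm lam p.2)

/-- A subsemimodule of `(R^n)²`. -/
def IsPairSemimodule {n : ℕ} (W : Set (Vec R n × Vec R n)) : Prop :=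
  ∀ p ∈ W, ∀ q ∈ W, ∀ lam mu : R, (smP lam p ⊔ smP mu q) ∈ W

/-- A congruence on `R^n`: an equivalence relation which is a
subsemimodule of `(R^n)²`. -/
def IsCongruence {n : ℕ} (W : Set (Vec R n × Vec R n)) : Prop :=
  Equivalence (fun x y => (x, y) ∈ W) ∧ IsPairSemimodule W

/-- The (max-plus) kernel of a matrix: `ker E = {(x,y) : E x = E y}`. -/
def kerM {p n : ℕ} (E : Matrix (Fin p) (Fin n) R) : Set (Vec R n × Vec R n) :=
  {w | mulVecMP E w.1 = mulVecMP E w.2}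

/-- The image of a matrix: `Im E = {E x}`. -/
def imM {n q : ℕ} (E : Matrix (Fin n) (Fin q) R) : Set (Vec R n) :=
  {y | ∃ x : Vec R q, y = mulVecMP E x}

/-- `A W = {(A x, A y) : (x,y) ∈ W}` for a set of pairs `W`. -/
def mapCong {n : ℕ} (A : Matrix (Fin n) (Fin n) R) (W : Set (Vec R n × Vec R n)) :
    Set (Vec R n × Vec R n) :=
  {p | ∃ w ∈ W, p = (mulVecMP A w.1, mulVecMP A w.2)}

/-- `A S = {A x : x ∈ S}`. -/
def mapSet {n : ℕ} (A : Matrix (Fin n) (Fin n) R) (S : Set (Vec R n)) : Set (Vec R n) :=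
  {y | ∃ x ∈ S, y = mulVecMP A x}

/-- `A⁻¹ S = {x : A x ∈ S}`. -/
def invSet {n : ℕ} (A : Matrix (Fin n) (Fin n) R) (S : Set (Vec R n)) : Set (Vec R n) :=
  {x | mulVecMP A x ∈ S}

/-- `A⁻¹ U = {(x,y) : (A x, A y) ∈ U}` for a set of pairs `U`. -/
def invPair {n : ℕ} (A : Matrix (Fin n) (Fin n) R) (U : Set (Vec R n × Vec R n)) :
    Set (Vec R n × Vec R n) :=
  {p | (mulVecMP A p.1, mulVecMP A p.2) ∈ U}

/-- The max-plus sum of two subsets of `R^n`: `X ⊕ Y = {x ⊕ y : x ∈ X, y ∈ Y}`. -/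
def setSum {n : ℕ} (X Y : Set (Vec R n)) : Set (Vec R n) :=
  {z | ∃ x ∈ X, ∃ y ∈ Y, z = x ⊔ y}

/-- The max-plus sum of two subsets of `(R^n)²`. -/
def pairSum {n : ℕ} (X Y : Set (Vec R n × Vec R n)) : Set (Vec R n × Vec R n) :=
  {z | ∃ x ∈ X, ∃ y ∈ Y, z = x ⊔ y}

/-- `W` is `(C,A)`-conditioned invariant: `A (W ∩ ker C) ⊆ W`. -/
def CondInv {n q : ℕ} (C : Matrix (Fin q) (Fin n) R) (A : Matrix (Fin n) (Fin n) R)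
    (W : Set (Vec R n × Vec R n)) : Prop :=
  mapCong A (W ∩ kerM C) ⊆ W

/-- `X` is `(A,B)`-controlled invariant: `A X ⊆ X ⊕ Im B`. -/
def ContrInv {n q : ℕ} (A : Matrix (Fin n) (Fin n) R) (B : Matrix (Fin n) (Fin q) R)
    (X : Set (Vec R n)) : Prop :=
  mapSet A X ⊆ setSum X (imM B)

/-- The max-plus scalar product `uᵗ v = ⊕_i u_i ⊙ v_i = max_i (u_i + v_i)`. -/
def dotMP {n : ℕ} (u v : Vec R n) : R := Finset.univ.sup fun i => u i + v i

/-- The orthogonal of a semimodule `X ⊆ R^n`: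
`X^⊥ = {(x,y) : xᵗ z = yᵗ z, ∀ z ∈ X}`. -/
def orthS {n : ℕ} (X : Set (Vec R n)) : Set (Vec R n × Vec R n) :=
  {p | ∀ z ∈ X, dotMP p.1 z = dotMP p.2 z}

/-- The orthogonal of a congruence (or set of pairs) `W ⊆ (R^n)²`:
`W^⊤ = {z : xᵗ z = yᵗ z, ∀ (x,y) ∈ W}`. -/
def orthC {n : ℕ} (W : Set (Vec R n × Vec R n)) : Set (Vec R n) :=
  {z | ∀ p ∈ W, dotMP p.1 z = dotMP p.2 z}

/-- The smallest congruence containing a set `S ⊆ (R^n)²`. -/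
def spanCong {n : ℕ} (S : Set (Vec R n × Vec R n)) : Set (Vec R n × Vec R n) :=
  ⋂₀ {W | IsCongruence W ∧ S ⊆ W}

/-- The smallest semimodule containing a set `S ⊆ R^n`. -/
def spanSet {n : ℕ} (S : Set (Vec R n)) : Set (Vec R n) :=
  ⋂₀ {K | IsSemimodule K ∧ S ⊆ K}

end Defs

section Aux

open Set

noncomputable instance : ConditionallyCompleteLinearOrder Rmax :=
  { WithBot.conditionallyCompleteLattice, (inferInstance : LinearOrder Rmax) with
    csSup_of_not_bddAbove := by
      intro s hs
      have h1 : sSup s = ⊥ := by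
        simp only [sSup, WithBot.instSupSet, WithTop.instInfSet]
        rw [if_pos]
        · right
          exact hs
      rw [h1, WithBot.sSup_empty]
    csInf_of_not_bddBelow := fun s H => (H (OrderBot.bddBelow s)).elim }

/-! ### Algebraic lemmas in `Rmax` -/

lemma Rmax.add_max (a b c : Rmax) : a + (b ⊔ c) = (a + b) ⊔ (a + c) := by
  rcases le_total b c with h | h
  · rw [max_eq_right h, max_eq_right (add_le_add_right h a)]
  · rw [max_eq_left h, max_eq_left (add_le_add_right h a)]

lemma Rmax.add_finsetSup {ι : Type*} (s : Finset ι) (a : Rmax) (f : ι → Rmax) :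
    a + s.sup f = s.sup fun i => a + f i := by
  induction s using Finset.cons_induction with
  | empty => simp
  | cons i s hi ih => rw [Finset.sup_cons, Finset.sup_cons, Rmax.add_max, ih]

lemma mulVecMP_sup {m k : ℕ} (A : Matrix (Fin m) (Fin k) Rmax) (x y : Vec Rmax k) :
    mulVecMP A (x ⊔ y) = mulVecMP A x ⊔ mulVecMP A y := by
  funext i
  show (Finset.univ.sup fun j => A i j + (x j ⊔ y j)) =
      (Finset.univ.sup fun j => A i j + x j) ⊔ (Finset.univ.sup fun j => A i j + y j)
  rw [← Finset.sup_sup]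
  exact Finset.sup_congr rfl fun j _ => by
    simpa [Pi.sup_apply] using Rmax.add_max (A i j) (x j) (y j)

lemma mulVecMP_sm {m k : ℕ} (A : Matrix (Fin m) (Fin k) Rmax) (lam : Rmax) (x : Vec Rmax k) :
    mulVecMP A (sm lam x) = sm lam (mulVecMP A x) := by
  funext i
  show (Finset.univ.sup fun j => A i j + (lam + x j)) = lam + Finset.univ.sup fun j => A i j + x j
  rw [Rmax.add_finsetSup]
  exact Finset.sup_congr rfl fun j _ => (add_left_comm _ _ _)

lemma mulVecMP_mono {m k : ℕ} (A : Matrix (Fin m) (Fin k) Rmax) {x y : Vec Rmax k}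
    (h : x ≤ y) : mulVecMP A x ≤ mulVecMP A y :=
  fun i => Finset.sup_mono_fun fun j _ => add_le_add_right (h j) _

/-! ### Semimodule lemmas -/

lemma sm_sup {k : ℕ} (lam : Rmax) (x y : Vec Rmax k) :
    sm lam (x ⊔ y) = sm lam x ⊔ sm lam y := by
  funext i; exact Rmax.add_max _ _ _

lemma isSemimodule_iInter {k : ℕ} {S : ℕ → Set (Vec Rmax k)}
    (h : ∀ j, IsSemimodule (S j)) : IsSemimodule (⋂ j, S j) := by
  intro x hx y hy lam mu
  exact Set.mem_iInter.2 fun j => h j x (Set.mem_iInter.1 hx j) y (Set.mem_iInter.1 hy j) lam mu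

lemma isSemimodule_inter {k : ℕ} {S T : Set (Vec Rmax k)}
    (hS : IsSemimodule S) (hT : IsSemimodule T) : IsSemimodule (S ∩ T) :=
  fun x hx y hy lam mu => ⟨hS x hx.1 y hy.1 lam mu, hT x hx.2 y hy.2 lam mu⟩

lemma isSemimodule_imM {k p : ℕ} (B : Matrix (Fin k) (Fin p) Rmax) :
    IsSemimodule (imM B) := by
  rintro x ⟨u, rfl⟩ y ⟨v, rfl⟩ lam mu
  exact ⟨sm lam u ⊔ sm mu v, by rw [mulVecMP_sup, mulVecMP_sm, mulVecMP_sm]⟩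

lemma isSemimodule_setSum {k : ℕ} {X Y : Set (Vec Rmax k)}
    (hX : IsSemimodule X) (hY : IsSemimodule Y) : IsSemimodule (setSum X Y) := by
  rintro z ⟨x, hx, y, hy, rfl⟩ z' ⟨x', hx', y', hy', rfl⟩ lam mu
  refine ⟨_, hX x hx x' hx' lam mu, _, hY y hy y' hy' lam mu, ?_⟩
  rw [sm_sup, sm_sup]
  exact (sup_sup_sup_comm _ _ _ _)

lemma isSemimodule_invSet {k : ℕ} (A : Matrix (Fin k) (Fin k) Rmax) {S : Set (Vec Rmax k)}
    (hS : IsSemimodule S) : IsSemimodule (invSet A S) := by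
  intro x hx y hy lam mu
  show mulVecMP A (sm lam x ⊔ sm mu y) ∈ S
  rw [mulVecMP_sup, mulVecMP_sm, mulVecMP_sm]
  exact hS _ hx _ hy lam mu

lemma setSum_mono_left {k : ℕ} {X X' Y : Set (Vec Rmax k)} (h : X ⊆ X') :
    setSum X Y ⊆ setSum X' Y := by
  rintro z ⟨x, hx, y, hy, rfl⟩; exact ⟨x, h hx, y, hy, rfl⟩

/-! ### Topological lemmas -/

lemma Rmax.continuous_const_add (c : Rmax) : Continuous fun z : Rmax => c + z := by
  induction c using WithBot.recBotCoe with
  | bot => simpa using continuous_const (y := (⊥ : Rmax))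
  | coe r =>
    have h : (fun z : Rmax => (r : Rmax) + z) =
        ⇑(OrderIso.withBotCongr (OrderIso.addLeft r)) := by
      funext z
      induction z using WithBot.recBotCoe with
      | bot => show (r : Rmax) + ⊥ = _; rw [WithBot.add_bot]; rfl
      | coe x => show (r : Rmax) + (x : ℝ) = _; rw [← WithBot.coe_add]; rfl
    rw [h]
    exact OrderIso.continuous _

lemma Rmax.continuous_finsetSup {γ : Type*} [TopologicalSpace γ] {ι : Type*} (s : Finset ι)
    (f : ι → γ → Rmax) (h : ∀ i, Continuous (f i)) :
    Continuous fun z => s.sup fun i => f i z := by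
  induction s using Finset.cons_induction with
  | empty => simpa using continuous_const (y := (⊥ : Rmax))
  | cons i s hi ih =>
    simp only [Finset.sup_cons]
    exact (h i).sup ih

lemma continuous_mulVecMP {m k : ℕ} (A : Matrix (Fin m) (Fin k) Rmax) :
    Continuous fun x : Vec Rmax k => mulVecMP A x := by
  refine continuous_pi fun i => ?_
  exact Rmax.continuous_finsetSup _ _ fun j =>
    (Rmax.continuous_const_add (A i j)).comp (continuous_apply j)

lemma Rmax.isCompact_Iic (z : Rmax) : IsCompact (Set.Iic z) := by
  have : Set.Iic z = Set.Icc ⊥ z := by ext x; simp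
  rw [this]; exact isCompact_Icc

lemma Vec.isCompact_Iic {k : ℕ} (c : Vec Rmax k) : IsCompact (Set.Iic c) := by
  have : Set.Iic c = Set.pi Set.univ fun i => Set.Iic (c i) := by
    ext x; simp [Pi.le_def, Set.mem_pi]
  rw [this]
  exact isCompact_univ_pi fun i => Rmax.isCompact_Iic (c i)

lemma continuous_vecSup {k : ℕ} :
    Continuous fun p : Vec Rmax k × Vec Rmax k => p.1 ⊔ p.2 := by
  refine continuous_pi fun i => ?_
  have h1 : Continuous fun p : Vec Rmax k × Vec Rmax k => p.1 i :=
    (continuous_apply i).comp continuous_fst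
  have h2 : Continuous fun p : Vec Rmax k × Vec Rmax k => p.2 i :=
    (continuous_apply i).comp continuous_snd
  exact h1.sup h2

/-- Closedness of the max-plus sum of two closed sets. -/
lemma isClosed_setSum {k : ℕ} {X Y : Set (Vec Rmax k)} (hX : IsClosed X) (hY : IsClosed Y) :
    IsClosed (setSum X Y) := by
  refine isClosed_of_closure_subset ?_
  intro z hz
  set c : Vec Rmax k := fun i => if z i = ⊥ then (0 : Rmax) else z i + 1 with hc
  have hzc : ∀ i, z i < c i := by
    intro i
    by_cases h : z i = ⊥
    · rw [hc]; simp only [h, if_pos]; exact WithBot.bot_lt_coe 0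
    · obtain ⟨r, hr⟩ := WithBot.ne_bot_iff_exists.1 h
      rw [hc]; simp only [if_neg h, ← hr]
      rw [show ((r : Rmax) + 1) = ((r + 1 : ℝ) : Rmax) from rfl]
      exact WithBot.coe_lt_coe.2 (by linarith)
  set U := {w : Vec Rmax k | ∀ i, w i < c i} with hU
  have hUopen : IsOpen U := by
    have : U = Set.pi Set.univ fun i => Set.Iio (c i) := by
      ext w; simp [hU, Set.mem_pi]
    rw [this]
    exact isOpen_set_pi Set.finite_univ fun i _ => isOpen_Iio
  have hzU : z ∈ U := fun i => hzc i
  set S := (fun p : Vec Rmax k × Vec Rmax k => p.1 ⊔ p.2) ''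
    ((X ∩ Set.Iic c) ×ˢ (Y ∩ Set.Iic c)) with hS
  have hScompact : IsCompact S :=
    ((((Vec.isCompact_Iic c).inter_left hX)).prod
      (((Vec.isCompact_Iic c).inter_left hY))).image continuous_vecSup
  have hsub : setSum X Y ∩ U ⊆ S := by
    rintro w ⟨⟨x, hx, y, hy, rfl⟩, hwU⟩
    refine ⟨(x, y), ⟨⟨hx, fun i => ?_⟩, hy, fun i => ?_⟩, rfl⟩
    · exact le_of_lt (lt_of_le_of_lt (le_sup_left : x i ≤ x i ⊔ y i) (hwU i))
    · exact le_of_lt (lt_of_le_of_lt (le_sup_right : y i ≤ x i ⊔ y i) (hwU i))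
  have hz' : z ∈ closure (setSum X Y ∩ U) := by
    rw [mem_closure_iff] at hz ⊢
    intro V hV hzV
    obtain ⟨w, hwV, hwS⟩ := hz (V ∩ U) (hV.inter hUopen) ⟨hzV, hzU⟩
    exact ⟨w, hwV.1, hwS, hwV.2⟩
  have hzS : z ∈ S := hScompact.isClosed.closure_subset ((closure_mono hsub) hz')
  obtain ⟨⟨x, y⟩, ⟨⟨hx, -⟩, hy, -⟩, rfl⟩ := hzS
  exact ⟨x, hx, y, hy, rfl⟩

end Aux


section Aux2

lemma Rmax.continuous_mapSub (b : ℝ) :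
    Continuous fun z : Rmax => z.map (fun r => r - b) := by
  have h : (fun z : Rmax => z.map (fun r => r - b)) =
      ⇑(OrderIso.withBotCongr (OrderIso.addRight (-b))) := by
    funext z
    induction z using WithBot.recBotCoe with
    | bot => rfl
    | coe x =>
      show ((x - b : ℝ) : Rmax) = ((x + (-b) : ℝ) : Rmax)
      rw [sub_eq_add_neg]
  rw [h]
  exact OrderIso.continuous _

lemma Rmax.continuous_finsetInf' {γ : Type*} [TopologicalSpace γ] {ι : Type*} (s : Finset ι)
    (hs : s.Nonempty) (f : ι → γ → Rmax) (h : ∀ i, Continuous (f i)) :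
    Continuous fun z => s.inf' hs fun i => f i z := by
  induction s using Finset.cons_induction with
  | empty => exact absurd hs (by simp)
  | cons i s hi ih =>
    rcases s.eq_empty_or_nonempty with rfl | hs'
    · simpa using h i
    · simp only [Finset.inf'_cons hs']
      exact (h i).inf (ih hs')

/-- The residuated "division" `B♯z`, giving the maximal `u` with `Bu ≤ z`
(restricted to columns with nonempty support). -/
noncomputable def sharp {k p : ℕ} (B : Matrix (Fin k) (Fin p) Rmax) (z : Vec Rmax k) :
    Vec Rmax p := fun j =>
  if h : (Finset.univ.filter fun i => B i j ≠ ⊥).Nonempty then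
    (Finset.univ.filter fun i => B i j ≠ ⊥).inf' h
      (fun i => (z i).map fun r => r - (B i j).unbotD 0)
  else ⊥

lemma continuous_sharp {k p : ℕ} (B : Matrix (Fin k) (Fin p) Rmax) :
    Continuous fun z : Vec Rmax k => sharp B z := by
  refine continuous_pi fun j => ?_
  by_cases h : (Finset.univ.filter fun i => B i j ≠ ⊥).Nonempty
  · simp only [sharp, dif_pos h]
    exact Rmax.continuous_finsetInf' _ h _ fun i =>
      (Rmax.continuous_mapSub _).comp (continuous_apply i)
  · simp only [sharp, dif_neg h]
    exact continuous_const

lemma sharp_mul_le {k p : ℕ} (B : Matrix (Fin k) (Fin p) Rmax) (z : Vec Rmax k) :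
    mulVecMP B (sharp B z) ≤ z := by
  intro i
  refine Finset.sup_le fun j _ => ?_
  by_cases hb : B i j = ⊥
  · rw [hb, WithBot.bot_add]; exact bot_le
  · have hne : (Finset.univ.filter fun i' => B i' j ≠ ⊥).Nonempty :=
      ⟨i, by simp [hb]⟩
    obtain ⟨b, hb'⟩ := WithBot.ne_bot_iff_exists.1 hb
    have h1 : sharp B z j ≤ (z i).map fun r => r - (B i j).unbotD 0 := by
      rw [sharp, dif_pos hne]
      exact Finset.inf'_le _ (by simp [hb])
    refine le_trans (add_le_add_right h1 _) ?_
    rw [← hb']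
    induction z i using WithBot.recBotCoe with
    | bot => rw [show ((⊥ : Rmax).map fun r => r - ((b : Rmax).unbotD 0)) = ⊥ from rfl,
        WithBot.add_bot]
    | coe w =>
      show ((b : Rmax) + ((w - b : ℝ) : Rmax)) ≤ ((w : ℝ) : Rmax)
      rw [← WithBot.coe_add]
      exact WithBot.coe_le_coe.2 (by linarith)

lemma Rmax.le_map_sub {a c : Rmax} {b : ℝ} (h : (b : Rmax) + a ≤ c) :
    a ≤ c.map fun r => r - b := by
  induction a using WithBot.recBotCoe with
  | bot => exact bot_le
  | coe v =>
    rw [← WithBot.coe_add] at h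
    induction c using WithBot.recBotCoe with
    | bot => exact absurd h (WithBot.not_coe_le_bot _)
    | coe w =>
      show ((v : ℝ) : Rmax) ≤ ((w - b : ℝ) : Rmax)
      exact WithBot.coe_le_coe.2 (by linarith [WithBot.coe_le_coe.1 h])

lemma le_sharp_mul {k p : ℕ} (B : Matrix (Fin k) (Fin p) Rmax) {u : Vec Rmax p}
    {z : Vec Rmax k} (h : mulVecMP B u ≤ z) :
    mulVecMP B u ≤ mulVecMP B (sharp B z) := by
  intro i
  refine Finset.sup_mono_fun fun j _ => ?_
  by_cases hb : B i j = ⊥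
  · rw [hb, WithBot.bot_add, WithBot.bot_add]
  · refine add_le_add_right ?_ _
    have hne : (Finset.univ.filter fun i' => B i' j ≠ ⊥).Nonempty := ⟨i, by simp [hb]⟩
    rw [sharp, dif_pos hne]
    refine Finset.le_inf' _ _ fun i' hi' => ?_
    have hb' : B i' j ≠ ⊥ := by simpa using hi'
    obtain ⟨b, hbb⟩ := WithBot.ne_bot_iff_exists.1 hb'
    have h2 : B i' j + u j ≤ z i' :=
      le_trans (Finset.le_sup (f := fun j' => B i' j' + u j') (Finset.mem_univ j)) (h i')
    rw [← hbb] at h2 ⊢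
    rw [WithBot.unbotD_coe]
    exact Rmax.le_map_sub h2

lemma imM_eq_fixed {k p : ℕ} (B : Matrix (Fin k) (Fin p) Rmax) :
    imM B = {z | mulVecMP B (sharp B z) = z} := by
  ext z
  constructor
  · rintro ⟨u, rfl⟩
    exact le_antisymm (sharp_mul_le _ _) (le_sharp_mul B (le_refl _))
  · intro h
    exact ⟨sharp B z, h.symm⟩

lemma isClosed_imM {k p : ℕ} (B : Matrix (Fin k) (Fin p) Rmax) : IsClosed (imM B) := by
  rw [imM_eq_fixed]
  exact isClosed_eq ((continuous_mulVecMP B).comp (continuous_sharp B)) continuous_id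

end Aux2


/-- For a closed semimodule `K`, with `φ(X) = K ∩ A⁻¹(X ⊕ Im B)`,
`X_1 = K`, `X_{k+1} = φ(X_k)`, the set `K^∞ = ⋂_k X_k` is the maximal
`(A,B)`-controlled invariant semimodule contained in `K`, and it is closed. -/
theorem Kinfty_is_maximal_controlled_invariant
    {n q : ℕ} (A : Matrix (Fin n) (Fin n) Rmax) (B : Matrix (Fin n) (Fin q) Rmax)
    (K : Set (Vec Rmax n)) (hK : IsSemimodule K) (hKc : IsClosed K)
    (Xseq : ℕ → Set (Vec Rmax n))
    (h0 : Xseq 0 = K)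
    (hstep : ∀ k, Xseq (k + 1) = K ∩ invSet A (setSum (Xseq k) (imM B))) :
    IsSemimodule (⋂ k, Xseq k) ∧ ContrInv A B (⋂ k, Xseq k) ∧ (⋂ k, Xseq k) ⊆ K ∧
      (∀ X : Set (Vec Rmax n), IsSemimodule X → ContrInv A B X → X ⊆ K →
        X ⊆ ⋂ k, Xseq k) ∧
      IsClosed (⋂ k, Xseq k) := by
  classical
  have hdec : ∀ k, Xseq (k + 1) ⊆ Xseq k := by
    intro k
    induction k with
    | zero => rw [hstep 0, h0]; exact Set.inter_subset_left
    | succ k ih =>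
      intro x hx
      rw [hstep (k + 1)] at hx
      rw [hstep k]
      exact ⟨hx.1, setSum_mono_left ih hx.2⟩
  have hsm : ∀ k, IsSemimodule (Xseq k) := by
    intro k
    induction k with
    | zero => rw [h0]; exact hK
    | succ k ih =>
      rw [hstep k]
      exact isSemimodule_inter hK
        (isSemimodule_invSet A (isSemimodule_setSum ih (isSemimodule_imM B)))
  have hcl : ∀ k, IsClosed (Xseq k) := by
    intro k
    induction k with
    | zero => rw [h0]; exact hKc
    | succ k ih =>
      rw [hstep k]
      exact hKc.inter
        ((isClosed_setSum ih (isClosed_imM B)).preimage (continuous_mulVecMP A))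
  refine ⟨isSemimodule_iInter hsm, ?_, ?_, ?_, isClosed_iInter hcl⟩
  · -- controlled invariance
    rintro y ⟨x, hx, rfl⟩
    set z := mulVecMP A x with hz
    set w := mulVecMP B (sharp B z) with hw
    have hwz : w ≤ z := sharp_mul_le B z
    have hstepk : ∀ k, ∃ v ∈ Xseq k, v ⊔ w = z := by
      intro k
      have hx1 : x ∈ Xseq (k + 1) := Set.mem_iInter.1 hx (k + 1)
      rw [hstep k] at hx1
      obtain ⟨v, hv, yB, ⟨u, rfl⟩, hzeq⟩ := hx1.2
      have hBu_le : mulVecMP B u ≤ z := by rw [hz, hzeq]; exact le_sup_right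
      have hBu_w : mulVecMP B u ≤ w := le_sharp_mul B hBu_le
      have hvz : v ≤ z := by rw [hz, hzeq]; exact le_sup_left
      refine ⟨v, hv, le_antisymm (sup_le hvz hwz) ?_⟩
      calc z = v ⊔ mulVecMP B u := hz.trans hzeq
        _ ≤ v ⊔ w := sup_le le_sup_left (le_trans hBu_w le_sup_right)
    set S : ℕ → Set (Vec Rmax n) := fun k => Xseq k ∩ {v | v ⊔ w = z} with hS
    have hcontw : Continuous fun v : Vec Rmax n => v ⊔ w := by
      refine continuous_pi fun i => ?_
      show Continuous fun v : Vec Rmax n => v i ⊔ w i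
      exact (continuous_apply i).sup continuous_const
    have hSclosed : ∀ k, IsClosed (S k) :=
      fun k => (hcl k).inter (isClosed_eq hcontw continuous_const)
    have hSne : ∀ k, (S k).Nonempty := by
      intro k
      obtain ⟨v, hv, he⟩ := hstepk k
      exact ⟨v, hv, he⟩
    have hSdec : ∀ k, S (k + 1) ⊆ S k :=
      fun k => Set.inter_subset_inter_left _ (hdec k)
    have hS0 : IsCompact (S 0) := by
      refine (Vec.isCompact_Iic z).of_isClosed_subset (hSclosed 0) ?_
      rintro v ⟨-, hv⟩
      exact le_trans le_sup_left (le_of_eq hv)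
    obtain ⟨v, hv⟩ :=
      IsCompact.nonempty_iInter_of_sequence_nonempty_isCompact_isClosed S hSdec hSne hS0 hSclosed
    have hvX : v ∈ ⋂ k, Xseq k := Set.mem_iInter.2 fun k => (Set.mem_iInter.1 hv k).1
    have hvw : v ⊔ w = z := (Set.mem_iInter.1 hv 0).2
    exact ⟨v, hvX, w, ⟨sharp B z, rfl⟩, hvw.symm⟩
  · -- contained in K
    exact fun x hx => h0 ▸ Set.mem_iInter.1 hx 0
  · -- maximality
    intro X hXsm hXci hXK
    have hXk : ∀ k, X ⊆ Xseq k := by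
      intro k
      induction k with
      | zero => rw [h0]; exact hXK
      | succ k ih =>
        rw [hstep k]
        intro x hx
        refine ⟨hXK hx, ?_⟩
        have hmem : mulVecMP A x ∈ setSum X (imM B) := hXci ⟨x, hx, rfl⟩
        exact setSum_mono_left ih hmem
    exact fun x hx => Set.mem_iInter.2 fun k => hXk k hx
end

section
/- Let A ∈ ℝ_max^{n×n}, B ∈ ℝ_max^{n×q}, C ∈ ℝ_max^{q×n}. (i) If a semimodule X ⊆ ℝ_max^n is (A,B)-controlled invariant (A X ⊆ X ⊕ Im B), then the congruence X^⊥ is (Bᵗ,Aᵗ)-conditioned invariant, i.e., Aᵗ(X^⊥ ∩ ker Bᵗ) ⊆ X^⊥. (ii) If a closed congruence W ⊂ (ℝ_max^n)² is (C,A)-conditioned invariant (A(W ∩ ker C) ⊆ W), then the semimodule W^⊤ is (Aᵗ,Cᵗ)-controlled invariant, i.e., Aᵗ(W^⊤) ⊆ W^⊤ ⊕ Im Cᵗ. -/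
/-! ### Auxiliary lemmas for the proof -/

namespace MPDual
open Finset

lemma rmax_cases (x : Rmax) : x = ⊥ ∨ ∃ r : ℝ, x = (r : Rmax) := by
  rcases x with _ | r
  · exact Or.inl rfl
  · exact Or.inr ⟨r, rfl⟩

lemma add_sup' (a b c : Rmax) : a + (b ⊔ c) = (a + b) ⊔ (a + c) := by
  rcases le_total b c with h | h
  · rw [sup_of_le_right h, sup_of_le_right (add_le_add_right h a)]
  · rw [sup_of_le_left h, sup_of_le_left (add_le_add_right h a)]

lemma sup_add' (a b c : Rmax) : (a ⊔ b) + c = (a + c) ⊔ (b + c) := by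
  rw [add_comm, add_sup', add_comm c a, add_comm c b]

lemma finsup_add {ι : Type*} (s : Finset ι) (f : ι → Rmax) (c : Rmax) :
    s.sup f + c = s.sup fun i => f i + c := by
  induction s using Finset.cons_induction with
  | empty => simp
  | cons a s ha ih => rw [sup_cons, sup_cons, sup_add', ih]

lemma add_finsup {ι : Type*} (s : Finset ι) (c : Rmax) (f : ι → Rmax) :
    c + s.sup f = s.sup fun i => c + f i := by
  rw [add_comm, finsup_add]
  exact Finset.sup_congr rfl fun i _ => add_comm _ _

lemma dot_comm {n : ℕ} (u v : Vec Rmax n) : dotMP u v = dotMP v u :=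
  Finset.sup_congr rfl fun i _ => add_comm _ _

lemma dot_sup_left {n : ℕ} (x y v : Vec Rmax n) :
    dotMP (x ⊔ y) v = dotMP x v ⊔ dotMP y v := by
  unfold dotMP
  rw [show (fun i => (x ⊔ y) i + v i)
      = ((fun i => x i + v i) ⊔ (fun i => y i + v i)) from funext fun i => sup_add' _ _ _,
    Finset.sup_sup]

lemma dot_sup_right {n : ℕ} (u x y : Vec Rmax n) :
    dotMP u (x ⊔ y) = dotMP u x ⊔ dotMP u y := by
  rw [dot_comm, dot_sup_left, dot_comm x u, dot_comm y u]

lemma mulVec_sup {m n : ℕ} (M : Matrix (Fin m) (Fin n) Rmax) (x y : Vec Rmax n) :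
    mulVecMP M (x ⊔ y) = mulVecMP M x ⊔ mulVecMP M y := by
  funext i
  show (Finset.univ.sup fun k => M i k + (x ⊔ y) k) = _
  rw [show (fun k => M i k + (x ⊔ y) k)
      = ((fun k => M i k + x k) ⊔ (fun k => M i k + y k)) from funext fun k => add_sup' _ _ _,
    Finset.sup_sup]
  rfl

lemma dot_mulVec_swap {m n : ℕ} (M : Matrix (Fin m) (Fin n) Rmax) (x : Vec Rmax m)
    (w : Vec Rmax n) : dotMP (mulVecMP M.transpose x) w = dotMP x (mulVecMP M w) := by
  unfold dotMP mulVecMP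
  calc (univ.sup fun i => (univ.sup fun k => M.transpose i k + x k) + w i)
      = univ.sup fun i => univ.sup fun k => M k i + x k + w i := by
        refine Finset.sup_congr rfl fun i _ => ?_
        rw [finsup_add]
        exact Finset.sup_congr rfl fun k _ => by rw [Matrix.transpose_apply]
    _ = univ.sup fun k => univ.sup fun i => M k i + x k + w i := Finset.sup_comm _ _ _
    _ = univ.sup fun k => x k + univ.sup fun i => M k i + w i := by
        refine Finset.sup_congr rfl fun k _ => ?_
        rw [add_finsup]
        exact Finset.sup_congr rfl fun i _ => by rw [add_right_comm, add_comm]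

lemma dot_sm {n : ℕ} (lam : Rmax) (y v : Vec Rmax n) :
    dotMP (sm lam y) v = lam + dotMP y v := by
  unfold dotMP sm
  rw [add_finsup]
  exact Finset.sup_congr rfl fun i _ => add_assoc _ _ _

lemma sm_zero {n : ℕ} (x : Vec Rmax n) : sm (0 : Rmax) x = x :=
  funext fun i => zero_add _

lemma smP_zero {n : ℕ} (p : Vec Rmax n × Vec Rmax n) : smP (0 : Rmax) p = p := by
  unfold smP
  rw [sm_zero, sm_zero]

lemma sm_sup {n : ℕ} (lam : Rmax) (x y : Vec Rmax n) :
    sm lam (x ⊔ y) = sm lam x ⊔ sm lam y :=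
  funext fun i => add_sup' _ _ _

/-- The `i`-th max-plus unit vector. -/
def eV {n : ℕ} (i : Fin n) : Vec Rmax n := fun k => if k = i then 0 else ⊥

lemma dot_eV {n : ℕ} (i : Fin n) (v : Vec Rmax n) : dotMP (eV i) v = v i := by
  unfold dotMP eV
  apply le_antisymm
  · refine Finset.sup_le fun k _ => ?_
    by_cases h : k = i
    · subst h; simp
    · simp [h]
  · calc v i = (if i = i then (0 : Rmax) else ⊥) + v i := by simp
      _ ≤ _ := Finset.le_sup (f := fun k => (if k = i then (0 : Rmax) else ⊥) + v k)
        (mem_univ i)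

lemma mulVec_eV {m n : ℕ} (M : Matrix (Fin m) (Fin n) Rmax) (i : Fin n) (j : Fin m) :
    mulVecMP M (eV i) j = M j i := by
  unfold mulVecMP eV
  apply le_antisymm
  · refine Finset.sup_le fun k _ => ?_
    by_cases h : k = i
    · subst h; simp
    · simp [h]
  · calc M j i = M j i + (if i = i then (0 : Rmax) else ⊥) := by simp
      _ ≤ _ := Finset.le_sup (f := fun k => M j k + (if k = i then (0 : Rmax) else ⊥))
        (mem_univ i)

section Cong

variable {n : ℕ} {W : Set (Vec Rmax n × Vec Rmax n)}

lemma mem_smP (hW : IsPairSemimodule W) {p} (hp : p ∈ W) (lam : Rmax) : smP lam p ∈ W := by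
  have h := hW p hp p hp lam lam
  rwa [sup_idem] at h

lemma mem_sup (hW : IsPairSemimodule W) {p q'} (hp : p ∈ W) (hq : q' ∈ W) : p ⊔ q' ∈ W := by
  have h := hW p hp q' hq 0 0
  rwa [smP_zero, smP_zero] at h

lemma sandwich (hW : IsCongruence W) {c d e : Vec Rmax n} (hcd : (c, d) ∈ W)
    (hde : d ≤ e) (hec : e ≤ c) : (e, d) ∈ W := by
  have h1 : ((c, d) ⊔ (e, e) : Vec Rmax n × Vec Rmax n) ∈ W :=
    mem_sup hW.2 hcd (hW.1.refl e)
  have h2 : ((c, d) ⊔ (e, e) : Vec Rmax n × Vec Rmax n) = (c ⊔ e, d ⊔ e) := rfl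
  rw [h2, sup_eq_left.mpr hec, sup_eq_right.mpr hde] at h1
  exact hW.1.trans (hW.1.symm h1) hcd

lemma sup_fst {ι : Type*} (S : Finset ι) (F : ι → Vec Rmax n × Vec Rmax n) :
    (S.sup F).1 = S.sup fun k => (F k).1 := by
  induction S using Finset.cons_induction with
  | empty => rfl
  | cons a s ha ih => rw [sup_cons, sup_cons, ← ih]; rfl

lemma sup_snd {ι : Type*} (S : Finset ι) (F : ι → Vec Rmax n × Vec Rmax n) :
    (S.sup F).2 = S.sup fun k => (F k).2 := by
  induction S using Finset.cons_induction with
  | empty => rfl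
  | cons a s ha ih => rw [sup_cons, sup_cons, ← ih]; rfl

lemma finsetComb (hW : IsPairSemimodule W) {ι : Type*} (lam : ι → Rmax)
    (p : ι → Vec Rmax n × Vec Rmax n) :
    ∀ {S : Finset ι}, S.Nonempty → (∀ k ∈ S, p k ∈ W) →
      S.sup (fun k => smP (lam k) (p k)) ∈ W := by
  intro S
  induction S using Finset.cons_induction with
  | empty => intro h; exact absurd h (by simp)
  | cons a s ha ih =>
    intro _ hp
    rw [Finset.sup_cons]
    rcases s.eq_empty_or_nonempty with rfl | hs
    · rw [Finset.sup_empty, sup_bot_eq]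
      exact mem_smP hW (hp a (Finset.mem_cons_self _ _)) _
    · exact mem_sup hW (mem_smP hW (hp a (Finset.mem_cons_self _ _)) (lam a))
        (ih hs fun k hk => hp k (Finset.mem_cons.mpr (Or.inr hk)))

end Cong

/-- Part (i) of Statement 14. -/
lemma part_one {n q : ℕ} (A : Matrix (Fin n) (Fin n) Rmax) (B : Matrix (Fin n) (Fin q) Rmax)
    (X : Set (Vec Rmax n)) (hc : ContrInv A B X) :
    CondInv B.transpose A.transpose (orthS X) := by
  rintro p ⟨w0, ⟨horth, hker⟩, rfl⟩
  intro zX hzX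
  have hmem : mulVecMP A zX ∈ mapSet A X := ⟨zX, hzX, rfl⟩
  obtain ⟨x', hx', yb, ⟨ub, rfl⟩, heq⟩ := hc hmem
  have key : ∀ x : Vec Rmax n, dotMP (mulVecMP A.transpose x) zX
      = dotMP x x' ⊔ dotMP (mulVecMP B.transpose x) ub := by
    intro x
    rw [dot_mulVec_swap, heq, dot_sup_right]
    congr 1
    calc dotMP x (mulVecMP B ub) = dotMP (mulVecMP B ub) x := dot_comm _ _
      _ = dotMP (mulVecMP B.transpose.transpose ub) x := by rw [Matrix.transpose_transpose]
      _ = dotMP ub (mulVecMP B.transpose x) := dot_mulVec_swap _ _ _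
      _ = dotMP (mulVecMP B.transpose x) ub := dot_comm _ _
  show dotMP (mulVecMP A.transpose w0.1) zX = dotMP (mulVecMP A.transpose w0.2) zX
  rw [key w0.1, key w0.2, horth x' hx']
  have hk : mulVecMP B.transpose w0.1 = mulVecMP B.transpose w0.2 := hker
  rw [hk]

/-- Part (ii) of Statement 14. -/
lemma part_two {n q : ℕ} (A : Matrix (Fin n) (Fin n) Rmax) (C : Matrix (Fin q) (Fin n) Rmax)
    (W : Set (Vec Rmax n × Vec Rmax n)) (hW : IsCongruence W) (hci : CondInv C A W) :
    ContrInv A.transpose C.transpose (orthC W) := by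
  rintro v ⟨z0, hz0, rfl⟩
  set v : Vec Rmax n := mulVecMP A.transpose z0 with hv
  have H : ∀ p ∈ W ∩ kerM C, dotMP p.1 v = dotMP p.2 v := by
    rintro p ⟨hpW, hpK⟩
    have hA : (mulVecMP A p.1, mulVecMP A p.2) ∈ W := hci ⟨p, ⟨hpW, hpK⟩, rfl⟩
    have h1 : ∀ x : Vec Rmax n, dotMP x v = dotMP (mulVecMP A x) z0 := by
      intro x
      calc dotMP x v = dotMP (mulVecMP A.transpose z0) x := dot_comm _ _
        _ = dotMP z0 (mulVecMP A x) := dot_mulVec_swap _ _ _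
        _ = dotMP (mulVecMP A x) z0 := dot_comm _ _
    rw [h1, h1, hz0 _ hA]
  set U : Fin q → Set Rmax := fun j => {x | ∀ i, x + C j i ≤ v i} with hU
  have hUne : ∀ j, (U j).Nonempty := fun j => ⟨⊥, fun i => by
    rw [WithBot.bot_add]; exact bot_le⟩
  set u : Vec Rmax q := fun j => sSup (U j) with hu
  set s : Vec Rmax n := mulVecMP C.transpose u with hs
  have hsv : ∀ i, s i ≤ v i := by
    intro i
    refine Finset.sup_le fun j _ => ?_
    rw [Matrix.transpose_apply]
    rcases rmax_cases (C j i) with hCji | ⟨cr, hCji⟩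
    · rw [hCji, WithBot.bot_add]; exact bot_le
    rcases rmax_cases (v i) with hvi | ⟨vr, hvi⟩
    · have hb : u j ≤ ⊥ := csSup_le (hUne j) fun x hx => by
        rcases rmax_cases x with rfl | ⟨xr, rfl⟩
        · exact le_refl _
        · exfalso
          have hxi := hx i
          rw [hCji, hvi, ← WithBot.coe_add] at hxi
          exact WithBot.not_coe_le_bot _ hxi
      rw [hCji, le_bot_iff.mp hb, WithBot.add_bot]
      exact bot_le
    · have hb : u j ≤ ((vr - cr : ℝ) : Rmax) := csSup_le (hUne j) fun x hx => by
        rcases rmax_cases x with rfl | ⟨xr, rfl⟩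
        · exact bot_le
        · have hxi := hx i
          rw [hCji, hvi, ← WithBot.coe_add] at hxi
          exact WithBot.coe_le_coe.mpr (by linarith [WithBot.coe_le_coe.mp hxi])
      calc C j i + u j ≤ (cr : Rmax) + ((vr - cr : ℝ) : Rmax) := by
            rw [hCji]; exact add_le_add_right hb _
        _ = v i := by rw [hvi, ← WithBot.coe_add]; norm_num
  set Y : Fin n → Set (Vec Rmax n) := fun i => {y | (eV i ⊔ y, y) ∈ W} with hY
  have hYe : ∀ i, eV i ∈ Y i := fun i => by
    show (eV i ⊔ eV i, eV i) ∈ W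
    rw [sup_idem]; exact hW.1.refl _
  set zz : Vec Rmax n := fun i => sInf ((fun y => dotMP y v) '' Y i) with hzz
  have hzzle : ∀ i, ∀ y ∈ Y i, zz i ≤ dotMP y v := fun i y hy =>
    csInf_le (OrderBot.bddBelow _) ⟨y, hy, rfl⟩
  have hzzge : ∀ i (t : Rmax), (∀ y ∈ Y i, t ≤ dotMP y v) → t ≤ zz i := fun i t h =>
    le_csInf ⟨_, ⟨_, hYe i, rfl⟩⟩ (by rintro x ⟨y, hy, rfl⟩; exact h y hy)
  have hzzv : ∀ i, zz i ≤ v i := fun i => by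
    have h := hzzle i (eV i) (hYe i); rwa [dot_eV] at h
  have haux : ∀ p ∈ W, dotMP p.1 zz ≤ dotMP p.2 zz := by
    rintro ⟨a, b⟩ hab
    show dotMP a zz ≤ dotMP b zz
    refine Finset.sup_le fun i _ => ?_
    by_contra hcon
    push_neg at hcon
    have hai : a i ≠ ⊥ := by
      intro h
      rw [h, WithBot.bot_add] at hcon
      exact not_lt_bot hcon
    obtain ⟨ar, har⟩ := (rmax_cases (a i)).resolve_left hai
    obtain ⟨c, hc1, hc2⟩ := exists_between hcon
    have hcbot : c ≠ ⊥ := fun h => not_lt_bot (h ▸ hc1)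
    obtain ⟨cr, rfl⟩ := (rmax_cases c).resolve_left hcbot
    have hsel : ∀ k : Fin n, ∃ y, y ∈ Y k ∧ b k + dotMP y v < (cr : Rmax) := by
      intro k
      rcases rmax_cases (b k) with hbk | ⟨br, hbk⟩
      · exact ⟨eV k, hYe k, by rw [hbk, WithBot.bot_add]; exact WithBot.bot_lt_coe cr⟩
      · by_contra hno
        push_neg at hno
        have hlb : ((cr - br : ℝ) : Rmax) ≤ zz k := by
          refine hzzge k _ fun y hy => ?_
          have h := hno y hy
          rw [hbk] at h
          rcases rmax_cases (dotMP y v) with hd | ⟨dr, hd⟩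
          · rw [hd, WithBot.add_bot] at h
            exact absurd h (WithBot.not_coe_le_bot _)
          · rw [hd, ← WithBot.coe_add] at h
            rw [hd]
            exact WithBot.coe_le_coe.mpr (by linarith [WithBot.coe_le_coe.mp h])
        have h1 : (cr : Rmax) ≤ b k + zz k := by
          calc (cr : Rmax) = (br : Rmax) + ((cr - br : ℝ) : Rmax) := by
                rw [← WithBot.coe_add]; norm_num
            _ ≤ b k + zz k := by rw [hbk]; exact add_le_add_right hlb _
        have h2 : b k + zz k ≤ dotMP b zz :=
          Finset.le_sup (f := fun k => b k + zz k) (mem_univ k)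
        exact absurd (lt_of_le_of_lt (h1.trans h2) hc1) (lt_irrefl _)
    choose Yk hYk hYkv using hsel
    set ystar : Vec Rmax n := fun j => univ.sup fun k => b k + Yk k j with hystar
    have hcomb : (b ⊔ ystar, ystar) ∈ W := by
      have hmem : (univ.sup fun k => smP (b k) (eV k ⊔ Yk k, Yk k)) ∈ W :=
        finsetComb hW.2 b _ ⟨i, mem_univ i⟩ fun k _ => hYk k
      have hfst : (univ.sup fun k => smP (b k) (eV k ⊔ Yk k, Yk k)).1 = b ⊔ ystar := by
        rw [sup_fst]
        funext j
        rw [Finset.sup_apply]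
        have hterm : ∀ k : Fin n, (smP (b k) (eV k ⊔ Yk k, Yk k)).1 j
            = (b k + eV k j) ⊔ (b k + Yk k j) := fun k => add_sup' _ _ _
        rw [Finset.sup_congr rfl fun k _ => hterm k]
        rw [show (fun k => (b k + eV k j) ⊔ (b k + Yk k j))
            = ((fun k => b k + eV k j) ⊔ (fun k => b k + Yk k j)) from rfl, Finset.sup_sup]
        have h1 : (univ.sup fun k => b k + eV k j) = b j := by
          apply le_antisymm
          · refine Finset.sup_le fun k _ => ?_
            unfold eV
            by_cases hkj : j = k
            · subst hkj; simp
            · simp [hkj]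
          · calc b j = b j + eV j j := by unfold eV; simp
              _ ≤ _ := Finset.le_sup (f := fun k => b k + eV k j) (mem_univ j)
        rw [h1]
        rfl
      have hsnd : (univ.sup fun k => smP (b k) (eV k ⊔ Yk k, Yk k)).2 = ystar := by
        rw [sup_snd]
        funext j
        rw [Finset.sup_apply]
        rfl
      rwa [show (univ.sup fun k => smP (b k) (eV k ⊔ Yk k, Yk k))
          = ((univ.sup fun k => smP (b k) (eV k ⊔ Yk k, Yk k)).1,
             (univ.sup fun k => smP (b k) (eV k ⊔ Yk k, Yk k)).2) from rfl,
        hfst, hsnd] at hmem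
    have h3 : (a ⊔ ystar, ystar) ∈ W := by
      have h2 : (a ⊔ ystar, b ⊔ ystar) ∈ W := mem_sup hW.2 hab (hW.1.refl ystar)
      exact hW.1.trans h2 hcomb
    have h4 : (sm ((-ar : ℝ) : Rmax) (a ⊔ ystar), sm ((-ar : ℝ) : Rmax) ystar) ∈ W :=
      mem_smP hW.2 h3 _
    set yt : Vec Rmax n := sm ((-ar : ℝ) : Rmax) ystar with hyt
    have h5 : yt ∈ Y i := by
      show (eV i ⊔ yt, yt) ∈ W
      refine sandwich hW h4 le_sup_right ?_
      rw [sm_sup]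
      refine sup_le (le_trans ?_ le_sup_left) le_sup_right
      intro k
      unfold eV sm
      by_cases hki : k = i
      · subst hki
        simp only [if_pos rfl]
        rw [har, ← WithBot.coe_add]
        norm_num
      · simp [hki]
    have h6 : zz i ≤ dotMP yt v := hzzle i yt h5
    have h8 : dotMP ystar v < (cr : Rmax) := by
      have hrw : dotMP ystar v = univ.sup fun k => b k + dotMP (Yk k) v := by
        unfold dotMP
        calc univ.sup (fun j => ystar j + v j)
            = univ.sup fun j => univ.sup fun k => b k + Yk k j + v j := by
              refine Finset.sup_congr rfl fun j _ => ?_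
              exact finsup_add _ _ _
          _ = univ.sup fun k => univ.sup fun j => b k + Yk k j + v j :=
              Finset.sup_comm _ _ _
          _ = univ.sup fun k => b k + univ.sup fun j => Yk k j + v j := by
              refine Finset.sup_congr rfl fun k _ => ?_
              rw [add_finsup]
              exact Finset.sup_congr rfl fun j _ => add_assoc _ _ _
      rw [hrw]
      exact (Finset.sup_lt_iff (WithBot.bot_lt_coe cr)).mpr fun k _ => hYkv k
    have h9 : a i + zz i < (cr : Rmax) := by
      calc a i + zz i ≤ a i + dotMP yt v := add_le_add_right h6 _
        _ = dotMP ystar v := by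
            rw [hyt, dot_sm, har, ← add_assoc, ← WithBot.coe_add]
            norm_num
        _ < _ := h8
    exact absurd (hc2.trans h9) (lt_irrefl _)
  have hzzW : zz ∈ orthC W := fun p hp =>
    le_antisymm (haux p hp) (haux (p.2, p.1) (hW.1.symm hp))
  have hkey : ∀ i, s i < v i → v i ≤ zz i := by
    intro i0 hsi
    have hvibot : v i0 ≠ ⊥ := fun h => not_lt_bot (h ▸ hsi)
    obtain ⟨vir, hvir⟩ := (rmax_cases (v i0)).resolve_left hvibot
    have hwit : ∀ j : Fin q, ∃ p : Fin n × ℝ, C j i0 ≠ ⊥ →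
        (C j i0 ≤ C j p.1 + ((p.2 : ℝ) : Rmax) ∧ ((p.2 : ℝ) : Rmax) + v p.1 < v i0) := by
      intro j
      by_cases hC : C j i0 = ⊥
      · exact ⟨(i0, 0), fun h => absurd hC h⟩
      obtain ⟨cj, hcj⟩ := (rmax_cases (C j i0)).resolve_left hC
      have hterm : C j i0 + u j ≤ s i0 := by
        calc C j i0 + u j = C.transpose i0 j + u j := by rw [Matrix.transpose_apply]
          _ ≤ s i0 := Finset.le_sup (f := fun j => C.transpose i0 j + u j) (mem_univ j)
      have hlt : C j i0 + u j < v i0 := lt_of_le_of_lt hterm hsi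
      have hbdd : BddAbove (U j) := ⟨((vir - cj : ℝ) : Rmax), fun x hx => by
        rcases rmax_cases x with rfl | ⟨xr, rfl⟩
        · exact bot_le
        · have hxi := hx i0
          rw [hcj, hvir, ← WithBot.coe_add] at hxi
          exact WithBot.coe_le_coe.mpr (by linarith [WithBot.coe_le_coe.mp hxi])⟩
      have hnotin : ((vir - cj : ℝ) : Rmax) ∉ U j := by
        intro hin
        have hle : ((vir - cj : ℝ) : Rmax) ≤ u j := le_csSup hbdd hin
        have hge : v i0 ≤ C j i0 + u j := by
          calc v i0 = (cj : Rmax) + ((vir - cj : ℝ) : Rmax) := by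
                rw [hvir, ← WithBot.coe_add]; norm_num
            _ ≤ C j i0 + u j := by rw [hcj]; exact add_le_add_right hle _
        exact absurd (lt_of_le_of_lt hge hlt) (lt_irrefl _)
      have hex : ∃ i', v i' < ((vir - cj : ℝ) : Rmax) + C j i' := by
        by_contra hno
        push_neg at hno
        exact hnotin fun i' => hno i'
      obtain ⟨i', hi'⟩ := hex
      have hCji' : C j i' ≠ ⊥ := fun h => by
        rw [h, WithBot.add_bot] at hi'
        exact not_lt_bot hi'
      obtain ⟨cj', hcj'⟩ := (rmax_cases (C j i')).resolve_left hCji'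
      refine ⟨(i', cj - cj'), fun _ => ⟨?_, ?_⟩⟩
      · show C j i0 ≤ C j i' + ((cj - cj' : ℝ) : Rmax)
        rw [hcj, hcj', ← WithBot.coe_add]
        exact WithBot.coe_le_coe.mpr (by linarith)
      · have h1 : v i' < ((vir - cj + cj' : ℝ) : Rmax) := by
          rw [hcj', ← WithBot.coe_add] at hi'
          exact hi'
        calc ((cj - cj' : ℝ) : Rmax) + v i'
            < ((cj - cj' : ℝ) : Rmax) + ((vir - cj + cj' : ℝ) : Rmax) :=
              WithBot.add_lt_add_left WithBot.coe_ne_bot h1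
          _ = v i0 := by rw [← WithBot.coe_add, hvir]; norm_num
    choose f hf using hwit
    classical
    set g : Vec Rmax n := fun i' => univ.sup fun j =>
      if C j i0 ≠ ⊥ ∧ i' = (f j).1 then (((f j).2 : ℝ) : Rmax) else ⊥ with hg
    have hCg : ∀ j, C j i0 ≤ mulVecMP C g j := by
      intro j
      by_cases hC : C j i0 = ⊥
      · rw [hC]; exact bot_le
      · have h2 : (((f j).2 : ℝ) : Rmax) ≤ g (f j).1 := by
          calc (((f j).2 : ℝ) : Rmax)
              = (if C j i0 ≠ ⊥ ∧ (f j).1 = (f j).1 then (((f j).2 : ℝ) : Rmax) else ⊥) := by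
                rw [if_pos ⟨hC, rfl⟩]
            _ ≤ g (f j).1 := Finset.le_sup
              (f := fun j' => if C j' i0 ≠ ⊥ ∧ (f j).1 = (f j').1 then (((f j').2 : ℝ) : Rmax) else ⊥)
              (mem_univ j)
        calc C j i0 ≤ C j (f j).1 + (((f j).2 : ℝ) : Rmax) := (hf j hC).1
          _ ≤ C j (f j).1 + g (f j).1 := add_le_add_right h2 _
          _ ≤ mulVecMP C g j :=
              Finset.le_sup (f := fun k => C j k + g k) (mem_univ (f j).1)
    have hgv : dotMP g v < v i0 := by
      rw [hvir]
      refine (Finset.sup_lt_iff (WithBot.bot_lt_coe vir)).mpr fun i' _ => ?_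
      have hgi : g i' + v i' = univ.sup fun j =>
          (if C j i0 ≠ ⊥ ∧ i' = (f j).1 then (((f j).2 : ℝ) : Rmax) else ⊥) + v i' :=
        finsup_add _ _ _
      rw [hgi]
      refine (Finset.sup_lt_iff (WithBot.bot_lt_coe vir)).mpr fun j _ => ?_
      by_cases hcond : C j i0 ≠ ⊥ ∧ i' = (f j).1
      · rw [if_pos hcond, hcond.2, ← hvir]
        exact (hf j hcond.1).2
      · rw [if_neg hcond, WithBot.bot_add]
        exact WithBot.bot_lt_coe vir
    refine hzzge i0 (v i0) fun y hy => ?_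
    have hpW : ((eV i0 ⊔ y) ⊔ g, y ⊔ g) ∈ W := mem_sup hW.2 hy (hW.1.refl g)
    have hpK : ((eV i0 ⊔ y) ⊔ g, y ⊔ g) ∈ kerM C := by
      show mulVecMP C ((eV i0 ⊔ y) ⊔ g) = mulVecMP C (y ⊔ g)
      rw [mulVec_sup, mulVec_sup, mulVec_sup]
      funext j
      show (mulVecMP C (eV i0) j ⊔ mulVecMP C y j) ⊔ mulVecMP C g j
          = mulVecMP C y j ⊔ mulVecMP C g j
      rw [mulVec_eV, sup_assoc]
      exact sup_eq_right.mpr (le_trans (hCg j) le_sup_right)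
    have hH := H _ ⟨hpW, hpK⟩
    have hL : v i0 ≤ dotMP ((eV i0 ⊔ y) ⊔ g) v := by
      calc v i0 = dotMP (eV i0) v := (dot_eV i0 v).symm
        _ ≤ _ := by
            rw [dot_sup_left, dot_sup_left]
            exact le_trans le_sup_left le_sup_left
    rw [hH, dot_sup_left] at hL
    by_contra hny
    push_neg at hny
    have hslt : dotMP y v ⊔ dotMP g v < v i0 := sup_lt_iff.mpr ⟨hny, hgv⟩
    exact absurd (lt_of_le_of_lt hL hslt) (lt_irrefl _)
  refine ⟨zz, hzzW, s, ⟨u, hs⟩, ?_⟩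
  funext i
  show v i = zz i ⊔ s i
  rcases lt_or_ge (s i) (v i) with h | h
  · rw [le_antisymm (hzzv i) (hkey i h)]
    exact (sup_eq_left.mpr (le_of_lt h)).symm
  · rw [le_antisymm (hsv i) h]
    exact (sup_eq_right.mpr (hzzv i)).symm

end MPDual


/-- (i) If a semimodule `X ⊆ ℝ_max^n` is `(A,B)`-controlled
invariant, then the congruence `X^⊥` is `(Bᵗ,Aᵗ)`-conditioned invariant.
(ii) If a closed congruence `W ⊆ (ℝ_max^n)²` is `(C,A)`-conditioned invariant,
then the semimodule `W^⊤` is `(Aᵗ,Cᵗ)`-controlled invariant. -/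
theorem controlled_conditioned_duality
    {n q : ℕ} (A : Matrix (Fin n) (Fin n) Rmax) (B : Matrix (Fin n) (Fin q) Rmax)
    (C : Matrix (Fin q) (Fin n) Rmax) :
    (∀ X : Set (Vec Rmax n), IsSemimodule X → ContrInv A B X →
      CondInv B.transpose A.transpose (orthS X)) ∧
    (∀ W : Set (Vec Rmax n × Vec Rmax n), IsCongruence W → IsClosed W →
      CondInv C A W → ContrInv A.transpose C.transpose (orthC W)) := by
  exact ⟨fun X _ hc => MPDual.part_one A B X hc, fun W hW _ hci => MPDual.part_two A C W hW hci⟩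
end
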